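/- arXiv:2012.14169 — 3 statements merged into one kernel-verified Lean document; each statement's English description precedes it below -/
import Mathlib

section
/- Let ε < 1/3 and Δ > 0, let G admit an (ε,η)-almost-clique decomposition V = V_sparse ∪ C_1 ∪ ... ∪ C_k, and let C be one of the almost-cliques. Then C has diameter at most 2 in G: for any two distinct vertices u, v ∈ C, either {u,v} ∈ E or there exists a vertex w ∈ C adjacent to both u and v. -/
open Finset

variable {V : Type*} [Fintype V] [DecidableEq V]

/-- Nodes `u, v` are `ε`-similar if `|N(u) ∩ N(v)| ≥ (1−ε)Δ`, where `Δ` is the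
maximum degree of `G`. -/
abbrev EpsSimilar (G : SimpleGraph V) [DecidableRel G.Adj] (ε : ℝ) (u v : V) : Prop :=
  (1 - ε) * (G.maxDegree : ℝ) ≤ ((G.neighborFinset u ∩ G.neighborFinset v).card : ℝ)

/-- Nodes `u, v` are `ε`-friends if they are `ε`-similar and adjacent. -/
abbrev Friends (G : SimpleGraph V) [DecidableRel G.Adj] (ε : ℝ) (u v : V) : Prop :=
  EpsSimilar G ε u v ∧ G.Adj u v

/-- A node is `ε`-dense if it has at least `(1−ε)Δ` `ε`-friends. -/
def IsDense (G : SimpleGraph V) [DecidableRel G.Adj] (ε : ℝ) (v : V) : Prop :=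
  (1 - ε) * (G.maxDegree : ℝ) ≤ ((univ.filter (fun w => Friends G ε v w)).card : ℝ)

/-- An `(ε,η)`-almost-clique decomposition of `G`: a partition
`V = V_sparse ∪ C 0 ∪ ... ∪ C (k-1)` such that `V_sparse` contains no `η`-dense node,
`(1−ε)Δ ≤ |C i| ≤ (1+ε)Δ`, and every `v ∈ C i` has at least `(1−ε)Δ` neighbors in `C i`. -/
structure IsACD (G : SimpleGraph V) [DecidableRel G.Adj] (ε η : ℝ) {k : ℕ}
    (Vsp : Finset V) (C : Fin k → Finset V) : Prop where
  cover : ∀ v : V, v ∈ Vsp ∨ ∃ i, v ∈ C i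
  disjoint_sparse : ∀ i, Disjoint Vsp (C i)
  disjoint_cliques : ∀ i j, i ≠ j → Disjoint (C i) (C j)
  sparse_not_dense : ∀ v ∈ Vsp, ¬ IsDense G η v
  card_lower : ∀ i, (1 - ε) * (G.maxDegree : ℝ) ≤ ((C i).card : ℝ)
  card_upper : ∀ i, ((C i).card : ℝ) ≤ (1 + ε) * (G.maxDegree : ℝ)
  nbr_lower : ∀ i, ∀ v ∈ C i, (1 - ε) * (G.maxDegree : ℝ) ≤ ((G.neighborFinset v ∩ C i).card : ℝ)

/-- If `ε < 1/3` and `Δ > 0`, every almost-clique `C i` of an `(ε,η)`-ACD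
has diameter at most 2: any two distinct `u, v ∈ C i` are adjacent or have a common
neighbor `w ∈ C i`. -/
theorem stmt2 (G : SimpleGraph V) [DecidableRel G.Adj] (ε η : ℝ)
    (hε0 : 0 < ε) (hε : ε < 1 / 3) (hη : η ∈ Set.Ioo (0 : ℝ) 1)
    (hΔ : 0 < G.maxDegree)
    {k : ℕ} (Vsp : Finset V) (C : Fin k → Finset V) (hACD : IsACD G ε η Vsp C)
    (i : Fin k) (u v : V) (hu : u ∈ C i) (hv : v ∈ C i) (huv : u ≠ v) :
    G.Adj u v ∨ ∃ w ∈ C i, G.Adj u w ∧ G.Adj w v := by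
  right
  set A := G.neighborFinset u ∩ C i with hA
  set B := G.neighborFinset v ∩ C i with hB
  have hAC : A ⊆ C i := inter_subset_right
  have hBC : B ⊆ C i := inter_subset_right
  have hunion : (A ∪ B).card ≤ (C i).card :=
    card_le_card (union_subset hAC hBC)
  have hie : A.card + B.card = (A ∪ B).card + (A ∩ B).card :=
    (card_union_add_card_inter A B).symm
  have h1 := hACD.nbr_lower i u hu
  have h2 := hACD.nbr_lower i v hv
  have h3 := hACD.card_upper i
  have hpos : (0 : ℝ) < ((A ∩ B).card : ℝ) := by
    have hcast : ((A ∩ B).card : ℝ) = (A.card : ℝ) + B.card - (A ∪ B).card := by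
      have h := congrArg (Nat.cast : ℕ → ℝ) hie
      push_cast at h; linarith
    have hΔR : (0 : ℝ) < (G.maxDegree : ℝ) := by exact_mod_cast hΔ
    have : ((A ∪ B).card : ℝ) ≤ (1 + ε) * G.maxDegree :=
      le_trans (by exact_mod_cast hunion) h3
    rw [hcast]
    nlinarith
  have hne : (A ∩ B).Nonempty := card_pos.mp (by exact_mod_cast hpos)
  obtain ⟨w, hw⟩ := hne
  simp only [hA, hB, mem_inter, SimpleGraph.mem_neighborFinset] at hw
  exact ⟨w, hw.2.2, hw.1.1, (hw.2.1).symm⟩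
end

section
/- Let γ < 1/2, let v be a γ-dense vertex of G, and let S_v ⊆ N(v) be a set of at least (1−γ)Δ neighbors of v, each of which is a γ-friend of v. Then every vertex w ∈ S_v is 2γ-dense; more precisely, every w ∈ S_v has at least (1−2γ)Δ neighbors in S_v, each of which is a 2γ-friend of w. -/
open Finset

variable {V : Type*} [Fintype V] [DecidableEq V]

lemma card_inter_ge_real (A B C : Finset V) (hA : A ⊆ C) (hB : B ⊆ C) :
    (A.card : ℝ) + (B.card : ℝ) - (C.card : ℝ) ≤ ((A ∩ B).card : ℝ) := by
  have h1 : (A ∪ B).card ≤ C.card := Finset.card_le_card (Finset.union_subset hA hB)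
  have h2 : (A ∪ B).card + (A ∩ B).card = A.card + B.card :=
    Finset.card_union_add_card_inter A B
  have := (Nat.cast_le (α := ℝ)).mpr h1
  have h2' : ((A ∪ B).card : ℝ) + ((A ∩ B).card : ℝ) = (A.card : ℝ) + (B.card : ℝ) := by
    exact_mod_cast congrArg (Nat.cast : ℕ → ℝ) h2
  linarith

/-- Let `γ < 1/2`, let `v` be a `γ`-dense vertex and `S_v ⊆ N(v)` a set of
at least `(1−γ)Δ` neighbors of `v`, each a `γ`-friend of `v`. Then every `w ∈ S_v` has at
least `(1−2γ)Δ` neighbors in `S_v`, each a `2γ`-friend of `w`; in particular every `w ∈ S_v`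
is `2γ`-dense. -/
theorem stmt6 (G : SimpleGraph V) [DecidableRel G.Adj] (γ : ℝ)
    (hγ0 : 0 < γ) (hγ : γ < 1 / 2) (v : V) (hv : IsDense G γ v)
    (Sv : Finset V) (hSsub : Sv ⊆ G.neighborFinset v)
    (hScard : (1 - γ) * (G.maxDegree : ℝ) ≤ (Sv.card : ℝ))
    (hSfriend : ∀ w ∈ Sv, Friends G γ v w) :
    ∀ w ∈ Sv,
      (1 - 2 * γ) * (G.maxDegree : ℝ) ≤
          (((Sv ∩ G.neighborFinset w).filter (fun x => Friends G (2 * γ) w x)).card : ℝ) ∧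
        IsDense G (2 * γ) w := by
  intro w hw
  have hdegv : ((G.neighborFinset v).card : ℝ) ≤ (G.maxDegree : ℝ) := by
    rw [SimpleGraph.card_neighborFinset_eq_degree]
    exact_mod_cast G.degree_le_maxDegree v
  have hwF := hSfriend w hw
  -- every x ∈ Sv ∩ N(w) is a 2γ-friend of w
  have hfr : ∀ x ∈ Sv ∩ G.neighborFinset w, Friends G (2 * γ) w x := by
    intro x hx
    rw [Finset.mem_inter] at hx
    have hxF := hSfriend x hx.1
    have hadj : G.Adj w x := (G.mem_neighborFinset w x).mp hx.2
    refine ⟨?_, hadj⟩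
    have hsub : (G.neighborFinset v ∩ G.neighborFinset w) ∩
        (G.neighborFinset v ∩ G.neighborFinset x) ⊆
        G.neighborFinset w ∩ G.neighborFinset x := by
      intro y hy
      rw [Finset.mem_inter, Finset.mem_inter, Finset.mem_inter] at hy
      exact Finset.mem_inter.mpr ⟨hy.1.2, hy.2.2⟩
    have hkey := card_inter_ge_real (G.neighborFinset v ∩ G.neighborFinset w)
      (G.neighborFinset v ∩ G.neighborFinset x) (G.neighborFinset v)
      (Finset.inter_subset_left) (Finset.inter_subset_left)
    have hmono : (((G.neighborFinset v ∩ G.neighborFinset w) ∩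
        (G.neighborFinset v ∩ G.neighborFinset x)).card : ℝ) ≤
        ((G.neighborFinset w ∩ G.neighborFinset x).card : ℝ) := by
      exact_mod_cast Finset.card_le_card hsub
    have h1 := hwF.1
    have h2 := hxF.1
    unfold EpsSimilar
    linarith
  -- card bound on Sv ∩ N(w)
  have hcardSw : (1 - 2 * γ) * (G.maxDegree : ℝ) ≤ ((Sv ∩ G.neighborFinset w).card : ℝ) := by
    have heq : Sv ∩ (G.neighborFinset v ∩ G.neighborFinset w) = Sv ∩ G.neighborFinset w := by
      ext y
      simp only [Finset.mem_inter]
      exact ⟨fun h => ⟨h.1, h.2.2⟩, fun h => ⟨h.1, hSsub h.1, h.2⟩⟩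
    have hkey := card_inter_ge_real Sv (G.neighborFinset v ∩ G.neighborFinset w)
      (G.neighborFinset v) hSsub (Finset.inter_subset_left)
    rw [heq] at hkey
    have h1 := hwF.1
    linarith
  have hfilter : (Sv ∩ G.neighborFinset w).filter (fun x => Friends G (2 * γ) w x) =
      Sv ∩ G.neighborFinset w := Finset.filter_true_of_mem hfr
  constructor
  · rw [hfilter]; exact hcardSw
  · unfold IsDense
    have hsub2 : Sv ∩ G.neighborFinset w ⊆ univ.filter (fun x => Friends G (2 * γ) w x) := by
      intro x hx
      exact Finset.mem_filter.mpr ⟨Finset.mem_univ x, hfr x hx⟩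
    have := Finset.card_le_card hsub2
    have : ((Sv ∩ G.neighborFinset w).card : ℝ) ≤
        ((univ.filter (fun x => Friends G (2 * γ) w x)).card : ℝ) := by exact_mod_cast this
    linarith
end

section
/- Let (M_i)_{i≥0} be a sequence of nonnegative real numbers and let r be a real number with 0 ≤ r ≤ 1/16. Suppose M_0 ≤ 1/4 and M_{i+1} ≤ M_i^{3/2} + r for all i ≥ 0. Then for all i ≥ 0, M_i ≤ (1/4)^{(5/4)^i} + 4r. -/
private lemma stepA (u v : ℝ) (hu : 0 ≤ u) (hv : 0 ≤ v) :
    3*u^4*v^2 + 3*u^2*v^4 ≤ u^6 + v^6 + 4*u^3*v^3 := by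
  nlinarith [mul_nonneg (sq_nonneg (u - v))
    (by positivity : (0:ℝ) ≤ u^4 + 2*u^3*v + 2*u*v^3 + v^4)]

private lemma stepPoly (t s : ℝ) (ht : 0 ≤ t) (hs : 0 ≤ s) (ht4 : t^4 ≤ 1/4)
    (hs1 : s ≤ 1/4) : (t^4 + 4*s^2)^3 ≤ (t^5 + 3*s^2)^2 := by
  have ht2 : t^2 ≤ 1/2 := by nlinarith [sq_nonneg (t^2 - 1/2)]
  have hA := stepA (t^2) (2*s) (by positivity) (by positivity)
  -- stepB: 2t¹²+32t⁶s³+128s⁶ ≤ t¹⁰+6t⁵s²+9s⁴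
  have h1 : t^10 * (1 - 2*t^2) ≥ 0 := by nlinarith [pow_nonneg ht 10]
  have hts : 16*t*s ≤ 3 := by nlinarith [mul_nonneg ht hs, sq_nonneg (4*t*s)]
  have h2 : 2*t^5*s^2*(3 - 16*t*s) ≥ 0 := by
    have : (0:ℝ) ≤ t^5*s^2 := by positivity
    nlinarith
  have hs2 : s^2 ≤ 1/16 := by nlinarith
  have h3 : s^4*(9 - 128*s^2) ≥ 0 := by nlinarith [pow_nonneg hs 4]
  nlinarith [hA, h1, h2, h3]

private lemma keyLem (a r : ℝ) (ha : 0 ≤ a) (ha1 : a ≤ 1/4) (hr0 : 0 ≤ r)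
    (hr : r ≤ 1/16) : (a + 4*r) ^ ((3:ℝ)/2) ≤ a ^ ((5:ℝ)/4) + 3*r := by
  set t := a ^ ((1:ℝ)/4) with htdef
  set s := Real.sqrt r with hsdef
  have hs0 : 0 ≤ s := Real.sqrt_nonneg r
  have hs2 : s^2 = r := Real.sq_sqrt hr0
  have hs1 : s ≤ 1/4 := by
    rw [hsdef, show (1/4 : ℝ) = Real.sqrt (1/16) by
      rw [show (1/16:ℝ) = (1/4)^2 by norm_num, Real.sqrt_sq (by norm_num)]]
    exact Real.sqrt_le_sqrt hr
  have ht0 : 0 ≤ t := Real.rpow_nonneg ha _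
  have ht4 : t^4 = a := by
    rw [htdef, ← Real.rpow_natCast (a ^ ((1:ℝ)/4)) 4, ← Real.rpow_mul ha]
    norm_num
  have ht5 : t^5 = a ^ ((5:ℝ)/4) := by
    rw [htdef, ← Real.rpow_natCast (a ^ ((1:ℝ)/4)) 5, ← Real.rpow_mul ha]
    norm_num
  have hsum : 0 ≤ a + 4*r := by linarith
  have hL0 : 0 ≤ (a + 4*r) ^ ((3:ℝ)/2) := Real.rpow_nonneg hsum _
  have hR0 : 0 ≤ a ^ ((5:ℝ)/4) + 3*r := by positivity
  have hsq : ((a + 4*r) ^ ((3:ℝ)/2))^2 ≤ (a ^ ((5:ℝ)/4) + 3*r)^2 := by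
    have hL : ((a + 4*r) ^ ((3:ℝ)/2))^2 = (a + 4*r)^3 := by
      rw [← Real.rpow_natCast ((a + 4*r) ^ ((3:ℝ)/2)) 2, ← Real.rpow_mul hsum,
        show (3:ℝ)/2 * (2:ℕ) = ((3:ℕ):ℝ) by norm_num, Real.rpow_natCast]
    rw [hL, ← ht5, ← ht4, ← hs2]
    exact stepPoly t s ht0 hs0 (by rw [ht4]; exact ha1) hs1
  nlinarith [hsq, hL0, hR0]

/-- If `0 ≤ r ≤ 1/16`, `M 0 ≤ 1/4` and `M (i+1) ≤ (M i)^(3/2) + r` for a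
sequence of nonnegative reals, then `M i ≤ (1/4)^((5/4)^i) + 4r` for all `i`. -/
theorem stmt10 (M : ℕ → ℝ) (r : ℝ) (hM : ∀ i, 0 ≤ M i)
    (hr0 : 0 ≤ r) (hr : r ≤ 1 / 16) (h0 : M 0 ≤ 1 / 4)
    (hrec : ∀ i, M (i + 1) ≤ M i ^ ((3 : ℝ) / 2) + r) :
    ∀ i, M i ≤ (1 / 4 : ℝ) ^ ((5 / 4 : ℝ) ^ i) + 4 * r := by
  have hbase : ∀ i : ℕ, (0:ℝ) ≤ (1 / 4 : ℝ) ^ ((5 / 4 : ℝ) ^ i) :=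
    fun i => Real.rpow_nonneg (by norm_num) _
  have hle : ∀ i : ℕ, (1 / 4 : ℝ) ^ ((5 / 4 : ℝ) ^ i) ≤ 1/4 := by
    intro i
    have h1 : (1:ℝ) ≤ (5/4:ℝ)^i := one_le_pow₀ (by norm_num : (1:ℝ) ≤ 5/4)
    calc (1 / 4 : ℝ) ^ ((5 / 4 : ℝ) ^ i) ≤ (1/4 : ℝ) ^ (1:ℝ) :=
          Real.rpow_le_rpow_of_exponent_ge (by norm_num) (by norm_num) h1
      _ = 1/4 := Real.rpow_one _
  intro i
  induction i with
  | zero =>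
      have : (5/4:ℝ)^(0:ℕ) = 1 := pow_zero _
      rw [this, Real.rpow_one]; linarith
  | succ n ih =>
      have h1 : M (n+1) ≤ M n ^ ((3:ℝ)/2) + r := hrec n
      have h2 : M n ^ ((3:ℝ)/2) ≤ ((1 / 4 : ℝ) ^ ((5 / 4 : ℝ) ^ n) + 4*r) ^ ((3:ℝ)/2) :=
        Real.rpow_le_rpow (hM n) ih (by norm_num)
      have h3 := keyLem ((1 / 4 : ℝ) ^ ((5 / 4 : ℝ) ^ n)) r (hbase n) (hle n) hr0 hr
      have h4 : ((1 / 4 : ℝ) ^ ((5 / 4 : ℝ) ^ n)) ^ ((5:ℝ)/4)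
          = (1 / 4 : ℝ) ^ ((5 / 4 : ℝ) ^ (n+1)) := by
        rw [← Real.rpow_mul (by norm_num : (0:ℝ) ≤ 1/4)]
        ring_nf
      rw [← h4]
      linarith
end
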